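/- Let n ≥ 2, ρ > n/(2^{n+1}-2), and let w[S] = (n-|S|-2ρ)2^{-|S|-1}. Let x' ∈ ℝ^{2^n - 1} be indexed by proper subsets S ⊊ [n] with x'[S] = (-2)^{|S|}, and let M' be the moment matrix M_{n-1}(w) restricted to proper subsets, M'[S,T] = w[S∪T]. Then x'ᵀ M' x' = n/2 - (2^n - 1)ρ < 0; in particular M' is not positive semidefinite. -/

import Mathlib

lemma aux_pow_sum {ι : Type*} [DecidableEq ι] (V : Finset ι) (x : ℝ) :
    ∑ S ∈ V.powerset, x ^ S.card = (x + 1) ^ V.card := by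
  induction V using Finset.induction_on with
  | empty => simp
  | @insert a V ha ih =>
    have hinj : ∀ s ∈ V.powerset, ∀ t ∈ V.powerset, insert a s = insert a t → s = t := by
      intro s hs t ht h
      rw [Finset.mem_powerset] at hs ht
      rw [← Finset.erase_insert (fun h' => ha (hs h')),
        ← Finset.erase_insert (fun h' => ha (ht h')), h]
    have hdisj : Disjoint V.powerset (V.powerset.image (insert a)) := by
      rw [Finset.disjoint_right]
      intro s hs hs'
      obtain ⟨t, ht, rfl⟩ := Finset.mem_image.mp hs
      exact ha (Finset.mem_powerset.mp hs' (Finset.mem_insert_self a t))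
    rw [Finset.powerset_insert, Finset.sum_union hdisj, Finset.sum_image hinj,
      Finset.card_insert_of_notMem ha]
    have : ∑ S ∈ V.powerset, x ^ (insert a S).card = x * ∑ S ∈ V.powerset, x ^ S.card := by
      rw [Finset.mul_sum]
      refine Finset.sum_congr rfl fun S hS => ?_
      rw [Finset.mem_powerset] at hS
      rw [Finset.card_insert_of_notMem (fun h' => ha (hS h')), pow_succ]
      ring
    rw [this, ih, pow_succ]
    ring

lemma aux_key {ι : Type*} [DecidableEq ι] (V : Finset ι) (φ : ℕ → ℝ) :
    ∑ S ∈ V.powerset, ∑ T ∈ V.powerset,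
      (-2 : ℝ) ^ S.card * (-2 : ℝ) ^ T.card * φ (S ∪ T).card = φ 0 := by
  induction V using Finset.induction_on generalizing φ with
  | empty => simp
  | @insert a V ha ih =>
    have hinj : ∀ s ∈ V.powerset, ∀ t ∈ V.powerset, insert a s = insert a t → s = t := by
      intro s hs t ht h
      rw [Finset.mem_powerset] at hs ht
      rw [← Finset.erase_insert (fun h' => ha (hs h')),
        ← Finset.erase_insert (fun h' => ha (ht h')), h]
    have hdisj : Disjoint V.powerset (V.powerset.image (insert a)) := by
      rw [Finset.disjoint_right]
      intro s hs hs'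
      obtain ⟨t, ht, rfl⟩ := Finset.mem_image.mp hs
      exact ha (Finset.mem_powerset.mp hs' (Finset.mem_insert_self a t))
    have hmem : ∀ s ∈ V.powerset, a ∉ s := fun s hs h' =>
      ha (Finset.mem_powerset.mp hs h')
    simp only [Finset.powerset_insert, Finset.sum_union hdisj, Finset.sum_image hinj]
    have ihψ := ih (fun k => φ (k + 1))
    have D01 : ∑ S ∈ V.powerset, ∑ T ∈ V.powerset,
        (-2 : ℝ) ^ S.card * (-2 : ℝ) ^ (insert a T).card * φ (S ∪ insert a T).card
        = -2 * φ 1 := by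
      rw [show (-2 : ℝ) * φ 1 = -2 * ∑ S ∈ V.powerset, ∑ T ∈ V.powerset,
          (-2 : ℝ) ^ S.card * (-2 : ℝ) ^ T.card * φ ((S ∪ T).card + 1) from by rw [ihψ],
        Finset.mul_sum]
      refine Finset.sum_congr rfl fun S hS => ?_
      rw [Finset.mul_sum]
      refine Finset.sum_congr rfl fun T hT => ?_
      have haU : a ∉ S ∪ T := by
        simp [hmem S hS, hmem T hT]
      rw [Finset.union_insert, Finset.card_insert_of_notMem (hmem T hT),
        Finset.card_insert_of_notMem haU, pow_succ]
      ring
    have D10 : ∑ S ∈ V.powerset, ∑ T ∈ V.powerset,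
        (-2 : ℝ) ^ (insert a S).card * (-2 : ℝ) ^ T.card * φ (insert a S ∪ T).card
        = -2 * φ 1 := by
      rw [show (-2 : ℝ) * φ 1 = -2 * ∑ S ∈ V.powerset, ∑ T ∈ V.powerset,
          (-2 : ℝ) ^ S.card * (-2 : ℝ) ^ T.card * φ ((S ∪ T).card + 1) from by rw [ihψ],
        Finset.mul_sum]
      refine Finset.sum_congr rfl fun S hS => ?_
      rw [Finset.mul_sum]
      refine Finset.sum_congr rfl fun T hT => ?_
      have haU : a ∉ S ∪ T := by
        simp [hmem S hS, hmem T hT]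
      rw [Finset.insert_union, Finset.card_insert_of_notMem (hmem S hS),
        Finset.card_insert_of_notMem haU, pow_succ]
      ring
    have D11 : ∑ S ∈ V.powerset, ∑ T ∈ V.powerset,
        (-2 : ℝ) ^ (insert a S).card * (-2 : ℝ) ^ (insert a T).card
          * φ (insert a S ∪ insert a T).card
        = 4 * φ 1 := by
      rw [show (4 : ℝ) * φ 1 = 4 * ∑ S ∈ V.powerset, ∑ T ∈ V.powerset,
          (-2 : ℝ) ^ S.card * (-2 : ℝ) ^ T.card * φ ((S ∪ T).card + 1) from by rw [ihψ],
        Finset.mul_sum]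
      refine Finset.sum_congr rfl fun S hS => ?_
      rw [Finset.mul_sum]
      refine Finset.sum_congr rfl fun T hT => ?_
      have haU : a ∉ S ∪ T := by
        simp [hmem S hS, hmem T hT]
      rw [show insert a S ∪ insert a T = insert a (S ∪ T) by
          rw [Finset.insert_union, Finset.union_insert, Finset.insert_idem],
        Finset.card_insert_of_notMem (hmem S hS),
        Finset.card_insert_of_notMem (hmem T hT),
        Finset.card_insert_of_notMem haU, pow_succ, pow_succ]
      ring
    rw [Finset.sum_add_distrib, Finset.sum_add_distrib, D01, D10, D11, ih φ]
    ring



/-- For `ρ > n/(2^{n+1}-2)`, the quadratic form of the restricted moment matrix at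
`x'[S] = (-2)^{|S|}` equals `n/2 - (2^n - 1)ρ < 0`; in particular the matrix is not PSD. -/
theorem restricted_moment_not_psd (n : ℕ) (hn : 2 ≤ n) (ρ : ℝ)
    (hρ : ρ > n / (2 ^ (n + 1) - 2))
    (w : Finset (Fin n) → ℝ)
    (hw : ∀ S : Finset (Fin n), w S = ((n : ℝ) - S.card - 2 * ρ) * 2 ^ (-(S.card : ℤ) - 1))
    (x' : {S : Finset (Fin n) // S ≠ Finset.univ} → ℝ)
    (hx' : ∀ S : {S : Finset (Fin n) // S ≠ Finset.univ}, x' S = (-2 : ℝ) ^ S.1.card)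
    (M' : Matrix {S : Finset (Fin n) // S ≠ Finset.univ}
                 {S : Finset (Fin n) // S ≠ Finset.univ} ℝ)
    (hM' : ∀ S T, M' S T = w (S.1 ∪ T.1)) :
    (∑ S, ∑ T, x' S * M' S T * x' T = n / 2 - (2 ^ n - 1) * ρ) ∧
    (n / 2 - (2 ^ n - 1 : ℝ) * ρ < 0) ∧ ¬ M'.PosSemidef := by
  set F : Finset (Fin n) → Finset (Fin n) → ℝ :=
    fun S T => (-2 : ℝ) ^ S.card * (-2 : ℝ) ^ T.card * w (S ∪ T) with hF
  have hcard : (Finset.univ : Finset (Fin n)).card = n := by simp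
  -- subtype sums to full sums
  have hsub : ∀ f : Finset (Fin n) → ℝ,
      ∑ S : {S : Finset (Fin n) // S ≠ Finset.univ}, f S.1
        = (∑ S : Finset (Fin n), f S) - f Finset.univ := by
    intro f
    rw [← Finset.sum_subtype (p := fun S => S ≠ Finset.univ)
        (Finset.univ.erase Finset.univ) (fun x => by simp) f]
    exact Finset.sum_erase_eq_sub (Finset.mem_univ _)
  -- full double sum
  have hFull : ∑ S : Finset (Fin n), ∑ T : Finset (Fin n), F S T
      = ((n : ℝ) - 2 * ρ) * 2 ^ (-1 : ℤ) := by
    have h := aux_key (Finset.univ : Finset (Fin n))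
      (fun k => ((n : ℝ) - k - 2 * ρ) * 2 ^ (-(k : ℤ) - 1))
    rw [Finset.powerset_univ] at h
    simp only [Nat.cast_zero, neg_zero, zero_sub, sub_zero] at h
    rw [← h]
    refine Finset.sum_congr rfl fun S _ => Finset.sum_congr rfl fun T _ => ?_
    simp only [hF, hw]
  -- row sums
  have hpow : ∑ S : Finset (Fin n), (-2 : ℝ) ^ S.card = (-1 : ℝ) ^ n := by
    have h := aux_pow_sum (Finset.univ : Finset (Fin n)) (-2)
    rw [Finset.powerset_univ, hcard] at h
    rw [h]; norm_num
  have hRow : ∑ S : Finset (Fin n), F S Finset.univ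
      = (-1 : ℝ) ^ n * ((-2 : ℝ) ^ n * w Finset.univ) := by
    rw [← hpow, Finset.sum_mul]
    refine Finset.sum_congr rfl fun S _ => ?_
    simp only [hF]
    rw [Finset.union_eq_right.mpr (Finset.subset_univ S), hcard]
    ring
  have hCol : ∑ T : Finset (Fin n), F Finset.univ T
      = (-1 : ℝ) ^ n * ((-2 : ℝ) ^ n * w Finset.univ) := by
    rw [← hpow, Finset.sum_mul]
    refine Finset.sum_congr rfl fun T _ => ?_
    simp only [hF]
    rw [Finset.union_eq_left.mpr (Finset.subset_univ T), hcard]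
    ring
  have hCorner : F Finset.univ Finset.univ
      = (-2 : ℝ) ^ n * ((-2 : ℝ) ^ n * w Finset.univ) := by
    simp only [hF]
    rw [Finset.union_eq_right.mpr (Finset.subset_univ Finset.univ), hcard]; ring
  have hwU : w Finset.univ = -2 * ρ * (2 : ℝ) ^ (-(n : ℤ) - 1) := by
    rw [hw, hcard]; ring
  have h2n : (2 : ℝ) ^ n * (2 : ℝ) ^ (-(n : ℤ) - 1) = 1 / 2 := by
    rw [← zpow_natCast (2 : ℝ) n, ← zpow_add₀ (by norm_num : (2 : ℝ) ≠ 0),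
      show (n : ℤ) + (-(n : ℤ) - 1) = -1 by ring]
    norm_num
  have hmain : ∑ S, ∑ T, x' S * M' S T * x' T = n / 2 - (2 ^ n - 1) * ρ := by
    have e1 : ∑ S, ∑ T, x' S * M' S T * x' T
        = ∑ S : {S : Finset (Fin n) // S ≠ Finset.univ},
            ∑ T : {T : Finset (Fin n) // T ≠ Finset.univ}, F S.1 T.1 := by
      refine Finset.sum_congr rfl fun S _ => Finset.sum_congr rfl fun T _ => ?_
      simp only [hx', hM', hF]
      ring
    rw [e1]
    have e2 : ∀ S : Finset (Fin n),
        ∑ T : {T : Finset (Fin n) // T ≠ Finset.univ}, F S T.1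
          = (∑ T : Finset (Fin n), F S T) - F S Finset.univ :=
      fun S => hsub (fun T => F S T)
    calc ∑ S : {S : Finset (Fin n) // S ≠ Finset.univ},
            ∑ T : {T : Finset (Fin n) // T ≠ Finset.univ}, F S.1 T.1
        = ∑ S : {S : Finset (Fin n) // S ≠ Finset.univ},
            ((∑ T : Finset (Fin n), F S.1 T) - F S.1 Finset.univ) := by
          exact Finset.sum_congr rfl fun S _ => e2 S.1
      _ = (∑ S : Finset (Fin n), ((∑ T : Finset (Fin n), F S T) - F S Finset.univ))
            - ((∑ T : Finset (Fin n), F Finset.univ T) - F Finset.univ Finset.univ) :=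
          hsub (fun S => (∑ T : Finset (Fin n), F S T) - F S Finset.univ)
      _ = (∑ S : Finset (Fin n), ∑ T : Finset (Fin n), F S T)
            - (∑ S : Finset (Fin n), F S Finset.univ)
            - (∑ T : Finset (Fin n), F Finset.univ T) + F Finset.univ Finset.univ := by
          rw [Finset.sum_sub_distrib]; ring
      _ = n / 2 - (2 ^ n - 1) * ρ := by
          rw [hFull, hRow, hCol, hCorner, hwU]
          have hm : ((-1 : ℝ)) ^ n * (-2 : ℝ) ^ n = 2 ^ n := by
            rw [← mul_pow]; norm_num
          have hm2 : ((-2 : ℝ)) ^ n * (-2 : ℝ) ^ n = 2 ^ n * 2 ^ n := by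
            rw [← mul_pow, ← mul_pow]; norm_num
          have hz : (2 : ℝ) ^ (-1 : ℤ) = 1 / 2 := by norm_num
          rw [hz]
          linear_combination (4 * ρ * (2:ℝ) ^ (-(n:ℤ) - 1)) * hm
            - (2 * ρ * (2:ℝ) ^ (-(n:ℤ) - 1)) * hm2 + (4 * ρ - 2 * ρ * (2:ℝ) ^ n) * h2n
  have hineq : (n : ℝ) / 2 - (2 ^ n - 1 : ℝ) * ρ < 0 := by
    have hP : (4 : ℝ) ≤ 2 ^ n := by
      calc (4 : ℝ) = 2 ^ 2 := by norm_num
        _ ≤ 2 ^ n := pow_le_pow_right₀ (by norm_num) hn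
    have hpos : (0 : ℝ) < 2 ^ (n + 1) - 2 := by
      rw [pow_succ]; nlinarith
    have h1 : (n : ℝ) < ρ * (2 ^ (n + 1) - 2) := (div_lt_iff₀ hpos).mp hρ
    have h2 : (2 : ℝ) ^ (n + 1) = 2 ^ n * 2 := pow_succ 2 n
    nlinarith
  refine ⟨hmain, hineq, fun hpsd => ?_⟩
  have h0 := hpsd.dotProduct_mulVec_nonneg x'
  have heq : dotProduct (star x') (M'.mulVec x')
      = ∑ S, ∑ T, x' S * M' S T * x' T := by
    simp only [dotProduct, Matrix.mulVec, Pi.star_apply, star_trivial,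
      Finset.mul_sum, mul_assoc]
  rw [heq, hmain] at h0
  linarith
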